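/- For every integer k ≥ 0, there are infinitely many n such that every nondeterministic OBDD on n variables computing the partial function PartialMOD^k_n has width at least 2^{k+1}. -/

import Mathlib

/-- Number of 1s in a binary string ν ∈ {0,1}^n. -/
def countOnes {n : ℕ} (ν : Fin n → Bool) : ℕ :=
  (Finset.univ.filter (fun i => ν i = true)).card

/-- Number of 0s in a binary string ν ∈ {0,1}^n. -/
def countZeros {n : ℕ} (ν : Fin n → Bool) : ℕ :=
  (Finset.univ.filter (fun i => ν i = false)).card

/-- Number of 1s among the first `k` bits. -/
def countOnesFirst (k : ℕ) {n : ℕ} (ν : Fin n → Bool) : ℕ :=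
  (Finset.univ.filter (fun i : Fin n => (i : ℕ) < k ∧ ν i = true)).card

/-- Number of 0s among the first `k` bits. -/
def countZerosFirst (k : ℕ) {n : ℕ} (ν : Fin n → Bool) : ℕ :=
  (Finset.univ.filter (fun i : Fin n => (i : ℕ) < k ∧ ν i = false)).card

/-- A deterministic OBDD of width `d` on `n` Boolean variables. -/
structure DOBDD (n d : ℕ) where
  ord : Equiv.Perm (Fin n)
  T : Fin n → Bool → Fin d → Fin d
  start : Fin d
  Accept : Finset (Fin d)

/-- The node reached by a deterministic OBDD after reading all input bits. -/
def DOBDD.run {n d : ℕ} (M : DOBDD n d) (ν : Fin n → Bool) : Fin d :=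
  (List.finRange n).foldl (fun v j => M.T j (ν (M.ord j)) v) M.start

def DOBDD.accepts {n d : ℕ} (M : DOBDD n d) (ν : Fin n → Bool) : Prop :=
  M.run ν ∈ M.Accept

/-- A deterministic OBDD computes a total Boolean function. -/
def DOBDD.computes {n d : ℕ} (M : DOBDD n d) (f : (Fin n → Bool) → Bool) : Prop :=
  ∀ ν, M.accepts ν ↔ f ν = true

/-- A nondeterministic OBDD of width `d` on `n` Boolean variables. -/
structure NOBDD (n d : ℕ) where
  ord : Equiv.Perm (Fin n)
  T : Fin n → Bool → Fin d → Set (Fin d)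
  start : Fin d
  Accept : Finset (Fin d)

/-- The set of nodes reachable by a nondeterministic OBDD after reading all input bits. -/
def NOBDD.reach {n d : ℕ} (M : NOBDD n d) (ν : Fin n → Bool) : Set (Fin d) :=
  (List.finRange n).foldl (fun S j => {w | ∃ v ∈ S, w ∈ M.T j (ν (M.ord j)) v}) {M.start}

def NOBDD.accepts {n d : ℕ} (M : NOBDD n d) (ν : Fin n → Bool) : Prop :=
  ∃ v ∈ M.reach ν, v ∈ M.Accept

/-- A nondeterministic OBDD computes a total Boolean function. -/
def NOBDD.computes {n d : ℕ} (M : NOBDD n d) (f : (Fin n → Bool) → Bool) : Prop :=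
  ∀ ν, M.accepts ν ↔ f ν = true

/-- The class of Boolean functions on n variables computed by deterministic
OBDDs of width at most `w`. -/
def OBDDclass (n w : ℕ) : Set ((Fin n → Bool) → Bool) :=
  {f | ∃ d, d ≤ w ∧ ∃ M : DOBDD n d, M.computes f}

/-- The class of Boolean functions on n variables computed by nondeterministic
OBDDs of width at most `w`. -/
def NOBDDclass (n w : ℕ) : Set ((Fin n → Bool) → Bool) :=
  {f | ∃ d, d ≤ w ∧ ∃ M : NOBDD n d, M.computes f}

/-- Final probability distribution of a stable probabilistic OBDD given by the pair of
left-stochastic matrices `A`, variable order `ord`, and initial node `s`. -/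
noncomputable def stableProbRun {n d : ℕ} (A : Bool → Matrix (Fin d) (Fin d) ℝ)
    (ord : Equiv.Perm (Fin n)) (s : Fin d) (ν : Fin n → Bool) : Fin d → ℝ :=
  (List.finRange n).foldl (fun v j => (A (ν (ord j))).mulVec v)
    (fun i => if i = s then 1 else 0)

/-- Final quantum state of a stable ID quantum OBDD given by the pair of matrices `U`
and the initial computational-basis state `q0`, reading bits in the natural order. -/
noncomputable def quantumRunStable {n d : ℕ} (U : Bool → Matrix (Fin d) (Fin d) ℂ) (q0 : Fin d)
    (ν : Fin n → Bool) : Fin d → ℂ :=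
  (List.finRange n).foldl (fun ψ j => (U (ν j)).mulVec ψ)
    (fun i => if i = q0 then 1 else 0)

/-- A quantum OBDD of width `d` on `n` Boolean variables. -/
structure QOBDD (n d : ℕ) where
  ord : Equiv.Perm (Fin n)
  U : Fin n → Bool → Matrix (Fin d) (Fin d) ℂ
  unitary : ∀ j b, U j b ∈ Matrix.unitaryGroup (Fin d) ℂ
  q0 : Fin d
  Accept : Finset (Fin d)

/-- The final state of a quantum OBDD on input ν. -/
noncomputable def QOBDD.finalState {n d : ℕ} (M : QOBDD n d) (ν : Fin n → Bool) : Fin d → ℂ :=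
  (List.finRange n).foldl (fun ψ j => (M.U j (ν (M.ord j))).mulVec ψ)
    (fun i => if i = M.q0 then 1 else 0)

/-- The acceptance probability of a quantum OBDD on input ν. -/
noncomputable def QOBDD.acceptProb {n d : ℕ} (M : QOBDD n d) (ν : Fin n → Bool) : ℝ :=
  ∑ i ∈ M.Accept, Complex.normSq (M.finalState ν i)

/-- `NotO_n(ν) = 0` iff `#0(ν) = #1(ν)`. -/
def NotO (n : ℕ) (ν : Fin n → Bool) : Bool := !decide (countZeros ν = countOnes ν)

/-- `NotSQUARE_n(ν) = 0` iff `(#0(ν))² = #1(ν)`. -/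
def NotSQUARE (n : ℕ) (ν : Fin n → Bool) : Bool := !decide ((countZeros ν) ^ 2 = countOnes ν)

/-- `NotPOWER_n(ν) = 0` iff `2^{#0(ν)} = #1(ν)`. -/
def NotPOWER (n : ℕ) (ν : Fin n → Bool) : Bool := !decide (2 ^ (countZeros ν) = countOnes ν)

/-- `MOD^k_n(ν) = 1` iff `#1(ν) ≡ 0 (mod k)`. -/
def MODf (n k : ℕ) (ν : Fin n → Bool) : Bool := decide (countOnes ν % k = 0)

/-- `NotO^k_n(ν) = 0` iff `#^k_0(ν) = #^k_1(ν) = k/2`. -/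
def NotOk (n k : ℕ) (ν : Fin n → Bool) : Bool :=
  !decide (countZerosFirst k ν = k / 2 ∧ countOnesFirst k ν = k / 2)

/-- The ordered subsequence of value bits `ν_{2i}` (1-indexed, `1 ≤ i ≤ k/2`) whose
marker bit `ν_{2i-1}` equals `b`; `b = false` gives `α(ν)` and `b = true` gives `β(ν)`. -/
def valueSubseq {n : ℕ} (k : ℕ) (b : Bool) (ν : Fin n → Bool) : List Bool :=
  (List.range (k / 2)).filterMap (fun j =>
    if h : 2 * j + 1 < n then
      if ν ⟨2 * j, by omega⟩ = b then some (ν ⟨2 * j + 1, h⟩) else none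
    else none)

/-- `EQS^k_n(ν) = 1` iff `α(ν) = β(ν)`. -/
def EQS (n k : ℕ) (ν : Fin n → Bool) : Bool :=
  decide (valueSubseq k false ν = valueSubseq k true ν)

/-- `NotEQS^k_n(ν) = 1 - EQS^k_n(ν)`. -/
def NotEQS (n k : ℕ) (ν : Fin n → Bool) : Bool := !(EQS n k ν)


namespace PMx

variable {n d : ℕ} (M : NOBDD n d)

/-- the input corresponding to a word in reading-order coordinates -/
def wd (w : Fin n → Bool) : Fin n → Bool := fun i => w (M.ord.symm i)

def stepf (w : Fin n → Bool) (S : Set (Fin d)) (j : Fin n) : Set (Fin d) :=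
  {y | ∃ v ∈ S, y ∈ M.T j (w j) v}

def chunk (w : Fin n → Bool) (l : List (Fin n)) (S : Set (Fin d)) : Set (Fin d) :=
  l.foldl (stepf M w) S

lemma reach_wd (w : Fin n → Bool) :
    M.reach (wd M w) = chunk M w (List.finRange n) {M.start} := by
  unfold NOBDD.reach chunk stepf wd
  congr 1
  funext S j
  simp

lemma chunk_nil (w : Fin n → Bool) (S : Set (Fin d)) : chunk M w [] S = S := rfl

lemma chunk_cons (w : Fin n → Bool) (j : Fin n) (l : List (Fin n)) (S : Set (Fin d)) :
    chunk M w (j :: l) S = chunk M w l (stepf M w S j) := rfl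

lemma chunk_append (w : Fin n → Bool) (l₁ l₂ : List (Fin n)) (S : Set (Fin d)) :
    chunk M w (l₁ ++ l₂) S = chunk M w l₂ (chunk M w l₁ S) :=
  List.foldl_append

lemma chunk_congr {w w' : Fin n → Bool} {l : List (Fin n)} (h : ∀ j ∈ l, w j = w' j)
    (S : Set (Fin d)) : chunk M w l S = chunk M w' l S := by
  induction l generalizing S with
  | nil => rfl
  | cons j l ih =>
    rw [chunk_cons, chunk_cons, ih (fun x hx => h x (List.mem_cons_of_mem _ hx))]
    unfold stepf
    rw [h j List.mem_cons_self]

lemma chunk_mono {S S' : Set (Fin d)} (w : Fin n → Bool) (l : List (Fin n)) (h : S ⊆ S') :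
    chunk M w l S ⊆ chunk M w l S' := by
  induction l generalizing S S' with
  | nil => exact h
  | cons j l ih =>
    rw [chunk_cons, chunk_cons]
    apply ih
    intro y hy
    obtain ⟨v, hv, hy⟩ := hy
    exact ⟨v, h hv, hy⟩

lemma mem_stepf {w : Fin n → Bool} {S : Set (Fin d)} {j : Fin n} {z : Fin d} :
    z ∈ stepf M w S j ↔ ∃ v ∈ S, z ∈ M.T j (w j) v := Iff.rfl

lemma mem_chunk_iff (w : Fin n → Bool) (l : List (Fin n)) (S : Set (Fin d)) (x : Fin d) :
    x ∈ chunk M w l S ↔ ∃ y ∈ S, x ∈ chunk M w l {y} := by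
  induction l generalizing S with
  | nil =>
    simp [chunk_nil]
  | cons j l ih =>
    rw [chunk_cons, ih]
    constructor
    · rintro ⟨z, hz, hx⟩
      obtain ⟨y, hy, hzy⟩ := (mem_stepf M).mp hz
      refine ⟨y, hy, ?_⟩
      rw [chunk_cons]
      refine chunk_mono M w l ?_ hx
      intro u hu
      rw [Set.mem_singleton_iff] at hu
      subst hu
      exact (mem_stepf M).mpr ⟨y, rfl, hzy⟩
    · rintro ⟨y, hy, hx⟩
      rw [chunk_cons, ih] at hx
      obtain ⟨z, hz, hx⟩ := hx
      obtain ⟨y', hy', hz'⟩ := (mem_stepf M).mp hz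
      rw [Set.mem_singleton_iff] at hy'
      exact ⟨z, (mem_stepf M).mpr ⟨y, hy, hy' ▸ hz'⟩, hx⟩

/-- the sublist of levels `[a, b)` -/
def seglist (a b : ℕ) : List (Fin n) := ((List.finRange n).drop a).take (b - a)

lemma seglist_self (a : ℕ) : (seglist a a : List (Fin n)) = [] := by
  simp [seglist]

lemma seglist_zero_n : (seglist 0 n : List (Fin n)) = List.finRange n := by
  simp [seglist, List.take_of_length_le]

lemma seglist_append {a b c : ℕ} (h1 : a ≤ b) (h2 : b ≤ c) :
    (seglist a b : List (Fin n)) ++ seglist b c = seglist a c := by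
  unfold seglist
  have h3 : c - a = (b - a) + (c - b) := by omega
  rw [h3, List.take_add, List.drop_drop]
  have h4 : a + (b - a) = b := by omega
  rw [h4]

lemma mem_seglist {a b : ℕ} {j : Fin n} (h : j ∈ (seglist a b : List (Fin n))) :
    a ≤ (j : ℕ) ∧ (j : ℕ) < b := by
  unfold seglist at h
  obtain ⟨i, hi, hj⟩ := List.mem_iff_getElem.mp h
  have hlen : (List.take (b - a) ((List.finRange n).drop a)).length = min (b - a) (n - a) := by
    simp
  rw [hlen] at hi
  have h1 : i < b - a := lt_of_lt_of_le hi (min_le_left _ _)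
  have h2 : a + i < n := by omega
  have hval : ((List.take (b - a) ((List.finRange n).drop a))[i]'(by rw [hlen]; exact hi) : Fin n).val
      = a + i := by
    rw [List.getElem_take, List.getElem_drop]
    simp
  rw [hj] at hval
  omega


variable {n d : ℕ} (M : NOBDD n d)

def wcount (w : Fin n → Bool) (a b : ℕ) : ℕ :=
  (Finset.univ.filter fun j : Fin n => a ≤ (j : ℕ) ∧ (j : ℕ) < b ∧ w j = true).card

lemma wcount_add {a b c : ℕ} (w : Fin n → Bool) (h1 : a ≤ b) (h2 : b ≤ c) :
    wcount w a b + wcount w b c = wcount w a c := by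
  unfold wcount
  rw [← Finset.card_union_of_disjoint]
  · congr 1
    ext j
    simp only [Finset.mem_union, Finset.mem_filter, Finset.mem_univ, true_and]
    constructor
    · rintro (⟨x1, x2, x3⟩ | ⟨x1, x2, x3⟩) <;> exact ⟨by omega, by omega, x3⟩
    · rintro ⟨x1, x2, x3⟩
      by_cases hb : (j : ℕ) < b
      · exact Or.inl ⟨x1, hb, x3⟩
      · exact Or.inr ⟨by omega, x2, x3⟩
  · rw [Finset.disjoint_left]
    intro j hj1 hj2
    simp only [Finset.mem_filter, Finset.mem_univ, true_and] at hj1 hj2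
    omega

lemma wcount_congr {a b : ℕ} {w w' : Fin n → Bool}
    (h : ∀ j : Fin n, a ≤ (j : ℕ) → (j : ℕ) < b → w j = w' j) :
    wcount w a b = wcount w' a b := by
  unfold wcount
  congr 1
  ext j
  simp only [Finset.mem_filter, Finset.mem_univ, true_and]
  constructor
  · rintro ⟨x1, x2, x3⟩; exact ⟨x1, x2, by rw [← h j x1 x2]; exact x3⟩
  · rintro ⟨x1, x2, x3⟩; exact ⟨x1, x2, by rw [h j x1 x2]; exact x3⟩

lemma countOnes_wd (w : Fin n → Bool) : countOnes (wd M w) = wcount w 0 n := by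
  unfold countOnes wcount wd
  apply Finset.card_bij (fun i _ => M.ord.symm i)
  · intro i hi
    simp only [Finset.mem_filter, Finset.mem_univ, true_and] at *
    exact ⟨Nat.zero_le _, (M.ord.symm i).isLt, hi⟩
  · intro i _ i' _ hii
    exact M.ord.symm.injective hii
  · intro j hj
    refine ⟨M.ord j, ?_, by simp⟩
    simp only [Finset.mem_filter, Finset.mem_univ, true_and] at *
    simpa using hj.2.2

/-- number of `j : Fin n` with `a ≤ j < b` -/
lemma card_Ico_fin {a b : ℕ} (h1 : a ≤ b) (h2 : b ≤ n) :
    (Finset.univ.filter fun j : Fin n => a ≤ (j : ℕ) ∧ (j : ℕ) < b).card = b - a := by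
  rw [← Nat.card_Ico a b]
  apply Finset.card_bij (fun (j : Fin n) _ => (j : ℕ))
  · intro j hj
    simp only [Finset.mem_filter, Finset.mem_univ, true_and] at hj
    simp [Finset.mem_Ico, hj.1, hj.2]
  · intro j _ j' _ h
    exact Fin.ext h
  · intro m hm
    simp only [Finset.mem_Ico] at hm
    exact ⟨⟨m, lt_of_lt_of_le hm.2 h2⟩, by simp [Finset.mem_filter, hm.1, hm.2], rfl⟩

section Rel

variable (t : ℕ)

def Pre (q : ℕ) (v : Fin d) (r : ℕ) : Prop :=
  ∃ w, v ∈ chunk M w (seglist 0 q) {M.start} ∧ wcount w 0 q % t = r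

def Suf (q : ℕ) (v : Fin d) (s : ℕ) : Prop :=
  ∃ w f, f ∈ chunk M w (seglist q n) {v} ∧ f ∈ M.Accept ∧ wcount w q n % t = s

def SegR (q q' : ℕ) (v v' : Fin d) (x : ℕ) : Prop :=
  ∃ w, v' ∈ chunk M w (seglist q q') {v} ∧ wcount w q q' % t = x

def splice (q : ℕ) (w₁ w₂ : Fin n → Bool) : Fin n → Bool :=
  fun j => if (j : ℕ) < q then w₁ j else w₂ j

lemma pre_seg {q q' : ℕ} {v v' : Fin d} {r x : ℕ} (hq : q ≤ q') (hq' : q' ≤ n)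
    (hp : Pre M t q v r) (hs : SegR M t q q' v v' x) : Pre M t q' v' ((r + x) % t) := by
  obtain ⟨w₁, hv, hc1⟩ := hp
  obtain ⟨w₂, hv', hc2⟩ := hs
  refine ⟨splice q w₁ w₂, ?_, ?_⟩
  · rw [← seglist_append (Nat.zero_le q) hq, chunk_append]
    have e1 : chunk M (splice q w₁ w₂) (seglist 0 q) {M.start}
        = chunk M w₁ (seglist 0 q) {M.start} := by
      apply chunk_congr
      intro j hj
      have := mem_seglist hj
      simp [splice, this.2]
    have e2 : chunk M (splice q w₁ w₂) (seglist q q') {v}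
        = chunk M w₂ (seglist q q') {v} := by
      apply chunk_congr
      intro j hj
      have := mem_seglist hj
      simp [splice, Nat.not_lt_of_le this.1]
    rw [e1]
    refine chunk_mono M _ _ ?_ (e2 ▸ hv')
    intro u hu
    rw [Set.mem_singleton_iff] at hu
    exact hu ▸ hv
  · have e3 : wcount (splice q w₁ w₂) 0 q' = wcount w₁ 0 q + wcount w₂ q q' := by
      rw [← wcount_add _ (Nat.zero_le q) hq]
      congr 1
      · exact wcount_congr (fun j _ hb => by simp [splice, hb])
      · exact wcount_congr (fun j ha _ => by simp [splice, Nat.not_lt_of_le ha])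
    rw [e3, Nat.add_mod, hc1, hc2]

lemma seg_suf {q q' : ℕ} {v v' : Fin d} {x s : ℕ} (hq : q ≤ q') (hq' : q' ≤ n)
    (hg : SegR M t q q' v v' x) (hs : Suf M t q' v' s) : Suf M t q v ((x + s) % t) := by
  obtain ⟨w₁, hv', hc1⟩ := hg
  obtain ⟨w₂, f, hf, hacc, hc2⟩ := hs
  refine ⟨splice q' w₁ w₂, f, ?_, hacc, ?_⟩
  · rw [← seglist_append hq hq', chunk_append]
    have e1 : chunk M (splice q' w₁ w₂) (seglist q q') {v}
        = chunk M w₁ (seglist q q') {v} := by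
      apply chunk_congr
      intro j hj
      simp [splice, (mem_seglist hj).2]
    have e2 : chunk M (splice q' w₁ w₂) (seglist q' n) {v'}
        = chunk M w₂ (seglist q' n) {v'} := by
      apply chunk_congr
      intro j hj
      simp [splice, Nat.not_lt_of_le (mem_seglist hj).1]
    rw [e1]
    refine chunk_mono M _ _ ?_ (e2 ▸ hf)
    intro u hu
    rw [Set.mem_singleton_iff] at hu
    exact hu ▸ hv'
  · have e3 : wcount (splice q' w₁ w₂) q n = wcount w₁ q q' + wcount w₂ q' n := by
      rw [← wcount_add _ hq hq']
      congr 1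
      · exact wcount_congr (fun j _ hb => by simp [splice, hb])
      · exact wcount_congr (fun j ha _ => by simp [splice, Nat.not_lt_of_le ha])
    rw [e3, Nat.add_mod, hc1, hc2]

lemma pre_suf {q : ℕ} {v : Fin d} {r s : ℕ} (hq : q ≤ n)
    (hp : Pre M t q v r) (hs : Suf M t q v s) :
    ∃ ν, (∃ f ∈ M.reach ν, f ∈ M.Accept) ∧ countOnes ν % t = (r + s) % t := by
  obtain ⟨w₁, hv, hc1⟩ := hp
  obtain ⟨w₂, f, hf, hacc, hc2⟩ := hs
  refine ⟨wd M (splice q w₁ w₂), ⟨f, ?_, hacc⟩, ?_⟩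
  · rw [reach_wd, ← seglist_zero_n, ← seglist_append (Nat.zero_le q) hq, chunk_append]
    have e1 : chunk M (splice q w₁ w₂) (seglist 0 q) {M.start}
        = chunk M w₁ (seglist 0 q) {M.start} := by
      apply chunk_congr
      intro j hj
      simp [splice, (mem_seglist hj).2]
    have e2 : chunk M (splice q w₁ w₂) (seglist q n) {v}
        = chunk M w₂ (seglist q n) {v} := by
      apply chunk_congr
      intro j hj
      simp [splice, Nat.not_lt_of_le (mem_seglist hj).1]
    rw [e1]
    refine chunk_mono M _ _ ?_ (e2 ▸ hf)
    intro u hu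
    rw [Set.mem_singleton_iff] at hu
    exact hu ▸ hv
  · rw [countOnes_wd]
    have e3 : wcount (splice q w₁ w₂) 0 n = wcount w₁ 0 q + wcount w₂ q n := by
      rw [← wcount_add _ (Nat.zero_le q) hq]
      congr 1
      · exact wcount_congr (fun j _ hb => by simp [splice, hb])
      · exact wcount_congr (fun j ha _ => by simp [splice, Nat.not_lt_of_le ha])
    rw [e3, Nat.add_mod, hc1, hc2]

lemma mem_chunk_trans {a b c : ℕ} {v v' v'' : Fin d} {w : Fin n → Bool}
    (h1 : a ≤ b) (h2 : b ≤ c)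
    (m1 : v' ∈ chunk M w (seglist a b) {v}) (m2 : v'' ∈ chunk M w (seglist b c) {v'}) :
    v'' ∈ chunk M w (seglist a c) {v} := by
  rw [← seglist_append h1 h2, chunk_append]
  refine chunk_mono M _ _ ?_ m2
  intro u hu
  rw [Set.mem_singleton_iff] at hu
  exact hu ▸ m1

lemma split_chain {w : Fin n → Bool} {f : Fin d} :
    ∀ (m : ℕ) (c : ℕ → ℕ), (∀ i j, i ≤ j → c i ≤ c j) → c m ≤ n → ∀ v₀ : Fin d,
    f ∈ chunk M w (seglist (c 0) n) {v₀} →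
    ∃ z : ℕ → Fin d, z 0 = v₀ ∧
      (∀ i < m, z (i + 1) ∈ chunk M w (seglist (c i) (c (i + 1))) {z i}) ∧
      f ∈ chunk M w (seglist (c m) n) {z m} := by
  intro m
  induction m with
  | zero =>
    intro c _ _ v₀ hf
    exact ⟨fun _ => v₀, rfl, fun i hi => absurd hi (Nat.not_lt_zero i), hf⟩
  | succ m ih =>
    intro c hmono hcm v₀ hf
    have h01 : c 0 ≤ c 1 := hmono 0 1 (by omega)
    have h1n : c 1 ≤ n := le_trans (hmono 1 (m + 1) (by omega)) hcm
    rw [← seglist_append h01 h1n, chunk_append, mem_chunk_iff] at hf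
    obtain ⟨z₁, hz₁, hf⟩ := hf
    obtain ⟨z', hz'0, hstep, hfin⟩ :=
      ih (fun i => c (i + 1)) (fun i j hij => hmono (i + 1) (j + 1) (by omega)) hcm z₁ hf
    refine ⟨fun i => match i with | 0 => v₀ | (i' + 1) => z' i', rfl, ?_, hfin⟩
    intro i hi
    match i with
    | 0 => simpa [hz'0] using hz₁
    | (i' + 1) => exact hstep i' (by omega)

/-- solving `j * x ≡ 2^k (mod 2^(k+1))` -/
lemma exists_mul_modeq (k x : ℕ) (hx : 0 < x) (hxt : x < 2 ^ (k + 1)) :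
    ∃ j : ℕ, j * x ≡ 2 ^ k [MOD 2 ^ (k + 1)] := by
  set v := x.factorization 2 with hv
  have hxne : x ≠ 0 := hx.ne'
  have hdvd : 2 ^ v ∣ x := Nat.ordProj_dvd x 2
  have hle : 2 ^ v ≤ x := Nat.ordProj_le 2 hxne
  have hvk : v ≤ k := by
    by_contra hc
    have : 2 ^ (k + 1) ≤ 2 ^ v := Nat.pow_le_pow_right (by norm_num) (by omega)
    omega
  set u := x / 2 ^ v with hu
  have hxu : 2 ^ v * u = x := Nat.ordProj_mul_ordCompl_eq_self x 2
  have hu2 : ¬ 2 ∣ u := Nat.not_dvd_ordCompl Nat.prime_two hxne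
  have hmod : u % 2 = 1 := by
    rcases Nat.mod_two_eq_zero_or_one u with h | h
    · exact absurd (Nat.dvd_of_mod_eq_zero h) hu2
    · exact h
  have htgt1 : (1 : ℕ) < 2 ^ (k + 1) := Nat.one_lt_pow (by omega) (by norm_num)
  have hcop : Nat.Coprime u (2 ^ (k + 1)) := by
    apply Nat.Coprime.pow_right
    exact Nat.coprime_two_right.mpr (Nat.odd_iff.mpr hmod)
  obtain ⟨u', -, hu'⟩ := Nat.exists_mul_mod_eq_one_of_coprime hcop htgt1
  refine ⟨2 ^ (k - v) * u', ?_⟩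
  have heq : 2 ^ (k - v) * u' * x = 2 ^ k * (u * u') := by
    rw [← hxu]
    have hpw : 2 ^ (k - v) * 2 ^ v = 2 ^ k := by
      rw [← pow_add]
      congr 1
      omega
    calc 2 ^ (k - v) * u' * (2 ^ v * u) = (2 ^ (k - v) * 2 ^ v) * (u * u') := by ring
    _ = 2 ^ k * (u * u') := by rw [hpw]
  have h1 : u * u' ≡ 1 [MOD 2 ^ (k + 1)] := by
    unfold Nat.ModEq
    rw [hu', Nat.mod_eq_of_lt htgt1]
  have h2 := Nat.ModEq.mul_left (2 ^ k) h1
  rw [mul_one] at h2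
  rw [heq]
  exact h2

end Rel

end PMx


/-- Greedy pre-Ramsey: from a large finite set of naturals, extract an increasing
sequence whose pair-color depends only on the smaller index. -/
lemma pre_ramsey {C : Type} [DecidableEq C] [Fintype C] [Nonempty C] (f : ℕ → ℕ → C) :
    ∀ (L : ℕ) (s : Finset ℕ), (Fintype.card C + 1) ^ L ≤ s.card →
    ∃ (g : ℕ → ℕ) (col : ℕ → C),
      (∀ i j, i < j → j < L → g i < g j) ∧ (∀ i < L, g i ∈ s) ∧
      (∀ i j, i < j → j < L → f (g i) (g j) = col i) := by
  intro L
  induction L with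
  | zero =>
    intro s _
    exact ⟨id, fun _ => Classical.arbitrary C, fun i j _ h => absurd h (Nat.not_lt_zero _),
      fun i h => absurd h (Nat.not_lt_zero _), fun i j _ h => absurd h (Nat.not_lt_zero _)⟩
  | succ L ih =>
    intro s hs
    set q := Fintype.card C with hq
    have hpos : 0 < (q + 1) ^ (L + 1) := pow_pos (by omega) _
    have hne : s.Nonempty := Finset.card_pos.mp (by omega)
    set v := s.min' hne with hv
    set s' := s.erase v with hs'
    have hcard' : q * (q + 1) ^ L ≤ s'.card := by
      have h1 : s'.card = s.card - 1 := by
        rw [hs', Finset.card_erase_of_mem (s.min'_mem hne)]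
      have h2 : (q + 1) ^ (L + 1) = q * (q + 1) ^ L + (q + 1) ^ L := by ring
      have h3 : 1 ≤ (q + 1) ^ L := Nat.one_le_pow _ _ (by omega)
      omega
    obtain ⟨c₀, _, hfib⟩ := Finset.exists_le_card_fiber_of_mul_le_card_of_maps_to
      (s := s') (t := (Finset.univ : Finset C)) (f := fun u => f v u)
      (fun a _ => Finset.mem_univ _) Finset.univ_nonempty
      (by rw [Finset.card_univ]; exact hcard')
    obtain ⟨g', col', hg1, hg2, hg3⟩ := ih (s'.filter fun u => f v u = c₀) hfib
    refine ⟨fun i => match i with | 0 => v | (i' + 1) => g' i',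
            fun i => match i with | 0 => c₀ | (i' + 1) => col' i', ?_, ?_, ?_⟩
    · intro i j hij hjL
      match i, j with
      | 0, (j' + 1) =>
        have hmem := hg2 j' (by omega)
        rw [Finset.mem_filter] at hmem
        have h1 := Finset.mem_of_mem_erase hmem.1
        have h2 : g' j' ≠ v := Finset.ne_of_mem_erase hmem.1
        exact lt_of_le_of_ne (s.min'_le _ h1) (Ne.symm h2)
      | (i' + 1), (j' + 1) => exact hg1 i' j' (by omega) (by omega)
    · intro i hiL
      match i with
      | 0 => exact s.min'_mem hne
      | (i' + 1) =>
        have hmem := hg2 i' (by omega)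
        rw [Finset.mem_filter] at hmem
        exact Finset.mem_of_mem_erase hmem.1
    · intro i j hij hjL
      match i, j with
      | 0, (j' + 1) =>
        have hmem := hg2 j' (by omega)
        rw [Finset.mem_filter] at hmem
        exact hmem.2
      | (i' + 1), (j' + 1) => exact hg3 i' j' (by omega) (by omega)

theorem partialMOD_nondeterministic_lower_bound (k : ℕ) :
    ∀ N : ℕ, ∃ n, N ≤ n ∧
      ∀ (d : ℕ) (M : NOBDD n d),
        (∀ ν : Fin n → Bool,
          (countOnes ν % 2 ^ (k + 1) = 0 → M.accepts ν) ∧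
          (countOnes ν % 2 ^ (k + 1) = 2 ^ k → ¬ M.accepts ν)) →
        2 ^ (k + 1) ≤ d := by
  classical
  intro N
  set t := 2 ^ (k + 1) with ht
  have ht2 : 2 ≤ t := by
    rw [ht]
    calc 2 = 2 ^ 1 := by norm_num
    _ ≤ 2 ^ (k + 1) := Nat.pow_le_pow_right (by norm_num) (by omega)
  have ht0 : 0 < t := by omega
  set m := 2 * t with hm
  set CB := 2 ^ (t * (t * t)) * (2 ^ (t * t) * 2 ^ (t * t)) with hCB
  set L := CB * (m + 1) + 1 with hL
  set P := (CB + 1) ^ L + N with hP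
  set n' := t * (P + 3) with hn'
  have hNn : N ≤ n' := by
    have h1 : N ≤ P := Nat.le_add_left _ _
    have h2 : P + 3 ≤ n' := by
      rw [hn']
      calc P + 3 = 1 * (P + 3) := (one_mul _).symm
      _ ≤ t * (P + 3) := Nat.mul_le_mul_right _ (by omega)
    omega
  refine ⟨n', hNn, ?_⟩
  intro d M hM
  by_contra hcon
  push_neg at hcon
  have hd0 : 0 < d := by
    rcases Nat.eq_zero_or_pos d with h | h
    · subst h; exact M.start.elim0
    · exact h
  -- color data
  set Eset : ℕ → ℕ → Finset (Fin d × Fin d × Fin t) := fun p q =>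
    Finset.univ.filter fun y =>
      PMx.SegR M t (t * (p + 1)) (t * (q + 1)) y.1 y.2.1 (y.2.2 : ℕ) with hEset
  set Sset : ℕ → Finset (Fin d × Fin t) := fun p =>
    Finset.univ.filter fun y => PMx.Suf M t (t * (p + 1)) y.1 (y.2 : ℕ) with hSset
  have hcard1 : Fintype.card (Finset (Fin d × Fin d × Fin t) ×
      Finset (Fin d × Fin t) × Finset (Fin d × Fin t)) ≤ CB := by
    simp only [Fintype.card_prod, Fintype.card_finset, Fintype.card_fin]
    rw [hCB]
    have hd : d ≤ t := le_of_lt hcon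
    refine Nat.mul_le_mul (Nat.pow_le_pow_right (by norm_num) ?_)
      (Nat.mul_le_mul (Nat.pow_le_pow_right (by norm_num) ?_)
        (Nat.pow_le_pow_right (by norm_num) ?_))
    · exact Nat.mul_le_mul hd (Nat.mul_le_mul hd le_rfl)
    · exact Nat.mul_le_mul hd le_rfl
    · exact Nat.mul_le_mul hd le_rfl
  set cc := Fintype.card (Finset (Fin d × Fin d × Fin t) ×
      Finset (Fin d × Fin t) × Finset (Fin d × Fin t)) with hcc
  set L' := cc * (m + 1) + 1 with hL'
  have hbig : (cc + 1) ^ L' ≤ (Finset.range P).card := by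
    rw [Finset.card_range]
    calc (cc + 1) ^ L' ≤ (CB + 1) ^ L' := Nat.pow_le_pow_left (by omega) _
    _ ≤ (CB + 1) ^ L := Nat.pow_le_pow_right (by omega)
        (by rw [hL', hL]; have := Nat.mul_le_mul_right (m + 1) hcard1; omega)
    _ ≤ P := Nat.le_add_right _ _
  obtain ⟨g, col, hg1, hg2, hg3⟩ :=
    pre_ramsey (fun p q => (Eset p q, Sset p, Sset q)) L' (Finset.range P) hbig
  obtain ⟨κ, -, hκ⟩ := Finset.exists_le_card_fiber_of_mul_le_card_of_maps_to
    (s := Finset.range (cc * (m + 1))) (t := (Finset.univ :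
      Finset (Finset (Fin d × Fin d × Fin t) × Finset (Fin d × Fin t) × Finset (Fin d × Fin t))))
    (f := col) (fun a _ => Finset.mem_univ _) Finset.univ_nonempty
    (by rw [Finset.card_univ, Finset.card_range, hcc])
  obtain ⟨F, hFsub, hFcard⟩ := Finset.exists_subset_card_eq hκ
  set oe := F.orderEmbOfFin hFcard with hoe
  have hoemem : ∀ i : Fin (m + 1), oe i ∈ Finset.filter (fun x => col x = κ)
      (Finset.range (cc * (m + 1))) := fun i => hFsub (F.orderEmbOfFin_mem hFcard i)
  have hoLT : ∀ i : Fin (m + 1), oe i < L' := by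
    intro i
    have := Finset.mem_range.mp (Finset.mem_filter.mp (hoemem i)).1
    omega
  have hcolκ : ∀ i : Fin (m + 1), col (oe i) = κ :=
    fun i => (Finset.mem_filter.mp (hoemem i)).2
  set σn : ℕ → ℕ := fun i => g (oe ⟨min i m, by omega⟩) with hσn
  set Cp : ℕ → ℕ := fun i => t * (σn i + 1) with hCp
  have hσlt : ∀ i j, i < j → j ≤ m → σn i < σn j := by
    intro i j hij hj
    apply hg1
    · exact oe.strictMono (by rw [Fin.mk_lt_mk]; omega)
    · exact hoLT _
  have hσP : ∀ i, σn i < P := by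
    intro i
    exact Finset.mem_range.mp (hg2 _ (hoLT ⟨min i m, by omega⟩))
  have hCn : ∀ i, Cp i ≤ n' := by
    intro i
    rw [hCp, hn']
    exact Nat.mul_le_mul_left _ (by have := hσP i; omega)
  have hσmono : ∀ i j, i ≤ j → σn i ≤ σn j := by
    intro i j hij
    have hmm : min i m ≤ min j m := by omega
    rcases eq_or_lt_of_le hmm with h | h
    · exact le_of_eq (congrArg (fun z : Fin (m + 1) => g (oe z)) (Fin.ext h))
    · exact le_of_lt (hg1 _ _ (oe.strictMono (Fin.mk_lt_mk.mpr h)) (hoLT _))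
  have hCmono : ∀ i j, i ≤ j → Cp i ≤ Cp j := by
    intro i j hij
    exact Nat.mul_le_mul_left _ (by have := hσmono i j hij; omega)
  have hCstrict : ∀ i j, i < j → j ≤ m → Cp i < Cp j := by
    intro i j hij hj
    exact (Nat.mul_lt_mul_left ht0).mpr (by have := hσlt i j hij hj; omega)
  have hfκ : ∀ i j : ℕ, i < j → j ≤ m →
      (Eset (σn i) (σn j), Sset (σn i), Sset (σn j)) = κ := by
    intro i j hij hj
    have h1 : oe ⟨min i m, by omega⟩ < oe ⟨min j m, by omega⟩ :=
      oe.strictMono (by rw [Fin.mk_lt_mk]; omega)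
    have h3 := hg3 _ _ h1 (hoLT ⟨min j m, by omega⟩)
    rw [hcolκ ⟨min i m, by omega⟩] at h3
    exact h3
  have hE : ∀ i j, i < j → j ≤ m → Eset (σn i) (σn j) = κ.1 := by
    intro i j hij hj
    have := hfκ i j hij hj
    simp only [Prod.ext_iff] at this
    exact this.1
  have hS : ∀ i, i ≤ m → Sset (σn i) = κ.2.1 := by
    have hSlt : ∀ i, i < m → Sset (σn i) = κ.2.1 := by
      intro i hi
      have := hfκ i m hi le_rfl
      simp only [Prod.ext_iff] at this
      exact this.2.1
    intro i hi
    rcases eq_or_lt_of_le hi with h | h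
    · subst h
      have h1 := hfκ 0 m (by omega) le_rfl
      have h2 := hfκ 0 1 (by omega) (by omega)
      simp only [Prod.ext_iff] at h1 h2
      rw [h1.2.2, ← h2.2.2]
      exact hSlt 1 (by omega)
    · exact hSlt i h
    -- the chain input word: one `1` just before each cut `Cp i`, `1 ≤ i ≤ m`
  set Wch : Fin n' → Bool :=
    fun j => if ∃ i ∈ Finset.Icc 1 m, (j : ℕ) + 1 = Cp i then true else false with hWch
  have hWdec : ∀ j : Fin n', Wch j = true ↔ ∃ i ∈ Finset.Icc 1 m, (j : ℕ) + 1 = Cp i := by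
    intro j
    rw [hWch]
    by_cases hp : ∃ i ∈ Finset.Icc 1 m, (j : ℕ) + 1 = Cp i
    · simp [hp]
    · simp [hp]
  have cl_zero : PMx.wcount Wch 0 (Cp 0) = 0 := by
    unfold PMx.wcount
    rw [Finset.card_eq_zero, Finset.filter_eq_empty_iff]
    rintro j -
    rintro ⟨-, hj2, hj3⟩
    obtain ⟨i, hi, hji⟩ := (hWdec j).mp hj3
    rw [Finset.mem_Icc] at hi
    have : Cp 0 < Cp i := hCstrict 0 i (by omega) (by omega)
    omega
  have cl_step : ∀ i' < m, PMx.wcount Wch (Cp i') (Cp (i' + 1)) = 1 := by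
    intro i' hi'
    unfold PMx.wcount
    rw [Finset.card_eq_one]
    have hlt : Cp i' < Cp (i' + 1) := hCstrict i' (i' + 1) (by omega) (by omega)
    have hnn : Cp (i' + 1) ≤ n' := hCn _
    refine ⟨⟨Cp (i' + 1) - 1, by omega⟩, ?_⟩
    ext j
    simp only [Finset.mem_filter, Finset.mem_univ, true_and, Finset.mem_singleton]
    constructor
    · rintro ⟨hj1, hj2, hj3⟩
      obtain ⟨i, hi, hji⟩ := (hWdec j).mp hj3
      rw [Finset.mem_Icc] at hi
      have hii : i' < i := by
        by_contra hc
        have := hCmono i i' (by omega)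
        omega
      have hii2 : i ≤ i' + 1 := by
        by_contra hc
        have := hCstrict (i' + 1) i (by omega) (by omega)
        omega
      have hieq : i = i' + 1 := by omega
      subst hieq
      apply Fin.ext
      simp only
      omega
    · rintro rfl
      refine ⟨by simp; omega, by simp; omega, (hWdec _).mpr
        ⟨i' + 1, Finset.mem_Icc.mpr ⟨by omega, by omega⟩, by simp; omega⟩⟩
  have cl_pre : ∀ i ≤ m, PMx.wcount Wch 0 (Cp i) = i := by
    intro i
    induction i with
    | zero => intro _; exact cl_zero
    | succ i ih =>
      intro hi
      have hadd := PMx.wcount_add (a := 0) (b := Cp i) (c := Cp (i + 1)) Wch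
        (Nat.zero_le _) (hCmono i (i + 1) (by omega))
      rw [← hadd, ih (by omega), cl_step i (by omega)]
  have cl_suf : PMx.wcount Wch (Cp m) n' = 0 := by
    unfold PMx.wcount
    rw [Finset.card_eq_zero, Finset.filter_eq_empty_iff]
    rintro j -
    rintro ⟨hj1, -, hj3⟩
    obtain ⟨i, hi, hji⟩ := (hWdec j).mp hj3
    rw [Finset.mem_Icc] at hi
    have : Cp i ≤ Cp m := hCmono i m (by omega)
    omega
  have cl_tot : PMx.wcount Wch 0 n' = m := by
    have hadd := PMx.wcount_add (a := 0) (b := Cp m) (c := n') Wch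
      (Nat.zero_le _) (hCn m)
    have e1 := cl_pre m le_rfl
    omega
  -- the chain input is accepted
  have haccch : M.accepts (PMx.wd M Wch) := by
    apply (hM _).1
    rw [PMx.countOnes_wd, cl_tot, hm]
    exact Nat.mul_mod_left 2 t
  obtain ⟨fnode, hfr, hfa⟩ := haccch
  rw [PMx.reach_wd, ← PMx.seglist_zero_n,
    ← PMx.seglist_append (Nat.zero_le (Cp 0)) (hCn 0), PMx.chunk_append,
    PMx.mem_chunk_iff] at hfr
  obtain ⟨v₀, hv₀, hfr⟩ := hfr
  obtain ⟨z, hz0, hstep, hzfin⟩ := PMx.split_chain M m Cp hCmono (hCn m) v₀ hfr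
  -- prefix and suffix data along the chain
  have mem_pre : ∀ i ≤ m, z i ∈ PMx.chunk M Wch (PMx.seglist 0 (Cp i)) {M.start} := by
    intro i
    induction i with
    | zero => intro _; rw [hz0]; exact hv₀
    | succ i ih =>
      intro hi
      exact PMx.mem_chunk_trans M (Nat.zero_le _) (hCmono i (i + 1) (by omega))
        (ih (by omega)) (hstep i (by omega))
  have hPre : ∀ i ≤ m, PMx.Pre M t (Cp i) (z i) (i % t) :=
    fun i hi => ⟨Wch, mem_pre i hi, by rw [cl_pre i hi]⟩
  have mem_suf' : ∀ jj ≤ m,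
      fnode ∈ PMx.chunk M Wch (PMx.seglist (Cp (m - jj)) n') {z (m - jj)} := by
    intro jj
    induction jj with
    | zero => intro _; simpa using hzfin
    | succ jj ih =>
      intro hjj
      have hi : m - (jj + 1) + 1 = m - jj := by omega
      have h1 : fnode ∈ PMx.chunk M Wch
          (PMx.seglist (Cp (m - (jj + 1) + 1)) n') {z (m - (jj + 1) + 1)} := by
        rw [hi]; exact ih (by omega)
      exact PMx.mem_chunk_trans M (hCmono (m - (jj + 1)) (m - (jj + 1) + 1) (by omega))
        (hCn _) (hstep (m - (jj + 1)) (by omega)) h1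
  have mem_suf : ∀ i ≤ m, fnode ∈ PMx.chunk M Wch (PMx.seglist (Cp i) n') {z i} := by
    intro i hi
    have := mem_suf' (m - i) (by omega)
    rw [show m - (m - i) = i by omega] at this
    exact this
  have hSuf : ∀ i ≤ m, PMx.Suf M t (Cp i) (z i) ((m - i) % t) := by
    intro i hi
    refine ⟨Wch, fnode, mem_suf i hi, hfa, ?_⟩
    have hadd := PMx.wcount_add (a := 0) (b := Cp i) (c := n') Wch
      (Nat.zero_le _) (hCn i)
    have e1 := cl_pre i hi
    have : PMx.wcount Wch (Cp i) n' = m - i := by omega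
    rw [this]
  -- collision of chain nodes
  obtain ⟨a, b, hab, hzab, hbd⟩ : ∃ a b, a < b ∧ z a = z b ∧ b ≤ d := by
    obtain ⟨a', ha'mem, b', hb'mem, hne, heq⟩ :=
      Finset.exists_ne_map_eq_of_card_lt_of_maps_to
        (s := Finset.range (d + 1)) (t := (Finset.univ : Finset (Fin d)))
        (by rw [Finset.card_univ, Fintype.card_fin, Finset.card_range]; omega)
        (f := fun i => z i) (fun a _ => Finset.mem_univ _)
    rw [Finset.mem_range] at ha'mem hb'mem
    rcases lt_or_gt_of_ne hne with h | h
    · exact ⟨a', b', h, heq, by omega⟩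
    · exact ⟨b', a', h, heq.symm, by omega⟩
  set x := b - a with hx
  have hx1 : 1 ≤ x := by omega
  have hbm : b ≤ m := by omega
  have hxt : x < t := by omega
  -- the loop segment
  have mem_loop : ∀ u, a + u ≤ m →
      z (a + u) ∈ PMx.chunk M Wch (PMx.seglist (Cp a) (Cp (a + u))) {z a} := by
    intro u
    induction u with
    | zero =>
      intro _
      simp only [Nat.add_zero, PMx.seglist_self, PMx.chunk_nil]
      exact rfl
    | succ u ih =>
      intro hu
      exact PMx.mem_chunk_trans M (hCmono a (a + u) (by omega))
        (hCmono (a + u) (a + u + 1) (by omega)) (ih (by omega)) (hstep (a + u) (by omega))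
  have hSegab : PMx.SegR M t (Cp a) (Cp b) (z a) (z a) x := by
    refine ⟨Wch, ?_, ?_⟩
    · have h2 := mem_loop (b - a) (by omega)
      rw [show a + (b - a) = b by omega, ← hzab] at h2
      exact h2
    · have hadd := PMx.wcount_add (a := 0) (b := Cp a) (c := Cp b) Wch
        (Nat.zero_le _) (hCmono a b (by omega))
      have e1 := cl_pre a (by omega)
      have e2 := cl_pre b hbm
      have : PMx.wcount Wch (Cp a) (Cp b) = x := by omega
      rw [this, Nat.mod_eq_of_lt hxt]
  have hmemE : (⟨z a, z a, ⟨x, hxt⟩⟩ : Fin d × Fin d × Fin t) ∈ Eset (σn a) (σn b) := by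
    rw [hEset]
    simp only [Finset.mem_filter, Finset.mem_univ, true_and]
    exact hSegab
  have hloopAll : ∀ l < m, PMx.SegR M t (Cp l) (Cp (l + 1)) (z a) (z a) x := by
    intro l hl
    have h1 : (⟨z a, z a, ⟨x, hxt⟩⟩ : Fin d × Fin d × Fin t) ∈ Eset (σn l) (σn (l + 1)) := by
      rw [hE l (l + 1) (by omega) (by omega), ← hE a b hab hbm]
      exact hmemE
    rw [hEset] at h1
    simp only [Finset.mem_filter, Finset.mem_univ, true_and] at h1
    exact h1
  -- choose the number of loop blocks
  obtain ⟨j0, hj0⟩ := PMx.exists_mul_modeq k x hx1 (by omega)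
  set jj := j0 % t + 1 with hjj
  have hjjt : jj ≤ t := by
    have := Nat.mod_lt j0 ht0
    omega
  have hajm : a + jj ≤ m := by omega
  have hloopPre : ∀ l ≤ jj, PMx.Pre M t (Cp (a + l)) (z a) ((a + l * x) % t) := by
    intro l
    induction l with
    | zero =>
      intro _
      simpa using hPre a (by omega)
    | succ l ih =>
      intro hl
      have hp := ih (by omega)
      have hseg := hloopAll (a + l) (by omega)
      have hthis := PMx.pre_seg M t (hCmono (a + l) (a + l + 1) (by omega)) (hCn _) hp hseg
      have e : ((a + l * x) % t + x) % t = (a + (l + 1) * x) % t := by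
        rw [Nat.mod_add_mod, Nat.succ_mul]
        congr 1
        omega
      rw [e] at hthis
      rw [show a + l + 1 = a + (l + 1) by omega] at hthis
      exact hthis
  -- transfer the suffix from cut b to cut a + jj
  have hSufb : PMx.Suf M t (Cp b) (z a) ((m - b) % t) := by
    have := hSuf b hbm
    rwa [← hzab] at this
  have hmemS : (⟨z a, ⟨(m - b) % t, Nat.mod_lt _ ht0⟩⟩ : Fin d × Fin t) ∈ Sset (σn b) := by
    rw [hSset]
    simp only [Finset.mem_filter, Finset.mem_univ, true_and]
    exact hSufb
  have hSufJ : PMx.Suf M t (Cp (a + jj)) (z a) ((m - b) % t) := by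
    have h1 : (⟨z a, ⟨(m - b) % t, Nat.mod_lt _ ht0⟩⟩ : Fin d × Fin t)
        ∈ Sset (σn (a + jj)) := by
      rw [hS (a + jj) hajm, ← hS b hbm]
      exact hmemS
    rw [hSset] at h1
    simp only [Finset.mem_filter, Finset.mem_univ, true_and] at h1
    exact h1
  -- build the bad input
  obtain ⟨ν, hνacc, hνcnt⟩ := PMx.pre_suf M t (hCn (a + jj)) (hloopPre jj le_rfl) hSufJ
  have h2k : 2 ^ k < t := by
    rw [ht]
    exact Nat.pow_lt_pow_right (by norm_num) (by omega)
  have hfinal : countOnes ν % t = 2 ^ k := by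
    rw [hνcnt]
    have e2 : (j0 % t) * x ≡ j0 * x [MOD t] := Nat.ModEq.mul_right x (Nat.mod_modEq j0 t)
    have e3 : jj * x ≡ 2 ^ k + x [MOD t] := by
      have e1 : jj * x = (j0 % t) * x + x := by rw [hjj]; ring
      rw [e1]
      exact (e2.trans hj0).add_right x
    have hmod : a + jj * x + (m - b) ≡ 2 ^ k [MOD t] := by
      calc a + jj * x + (m - b) ≡ a + (2 ^ k + x) + (m - b) [MOD t] :=
            ((e3.add_left a).add_right (m - b))
      _ = 2 ^ k + m := by omega
      _ ≡ 2 ^ k + 0 [MOD t] := by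
            refine Nat.ModEq.add_left _ ?_
            rw [hm]
            exact (Nat.modEq_zero_iff_dvd).mpr ⟨2, by ring⟩
      _ = 2 ^ k := by omega
    calc ((a + jj * x) % t + (m - b) % t) % t = (a + jj * x + (m - b)) % t := by
          rw [← Nat.add_mod]
    _ = 2 ^ k % t := hmod
    _ = 2 ^ k := Nat.mod_eq_of_lt h2k
  exact (hM ν).2 hfinal hνacc
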